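/- The equation −y′(x) + q(x)y(x) = f(x) on ℝ is correctly solvable in C(ℝ) (bounded continuous functions with the sup norm) if and only if there exists a ∈ (0,∞) such that q₀(a) := inf_{x∈ℝ} ∫_{x−a}^{x+a} q(t) dt > 0. -/

import Mathlib

open MeasureTheory Filter Topology Set
open scoped ENNReal

/-- `y` is a solution of `-y' + q y = f` on `ℝ`: it is locally absolutely
continuous and its a.e. derivative `y'` equals `q y - f`. -/
def IsSolution (q f y : ℝ → ℝ) : Prop :=
  LocallyIntegrable (fun t => q t * y t - f t) volume ∧
  ∀ a b : ℝ, y b - y a = ∫ t in a..b, (q t * y t - f t)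

/-- The equation `-y' + q y = f` is correctly solvable in `C(ℝ)`, the space of
bounded continuous functions with the supremum norm. -/
def CorrectlySolvableC (q : ℝ → ℝ) : Prop :=
  ∃ c : ℝ, 0 < c ∧ ∀ f : ℝ → ℝ, Continuous f → (∃ M : ℝ, ∀ t, |f t| ≤ M) →
    (∃! y : ℝ → ℝ, IsSolution q f y ∧ Continuous y ∧ (∃ M : ℝ, ∀ t, |y t| ≤ M)) ∧
    ∀ y : ℝ → ℝ, IsSolution q f y → Continuous y → (∃ M : ℝ, ∀ t, |y t| ≤ M) →
      ∀ x : ℝ, |y x| ≤ c * ⨆ t : ℝ, |f t|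

namespace Stmt1Aux

/-- The primitive of `q` based at `0`. -/
noncomputable def Q (q : ℝ → ℝ) (x : ℝ) : ℝ := ∫ t in (0:ℝ)..x, q t

variable {q : ℝ → ℝ}

lemma q_ii (hqloc : LocallyIntegrable q volume) (u v : ℝ) :
    IntervalIntegrable q volume u v :=
  (hqloc.integrableOn_isCompact isCompact_uIcc).intervalIntegrable

lemma Q_cont (hqloc : LocallyIntegrable q volume) : Continuous (Q q) :=
  intervalIntegral.continuous_primitive (q_ii hqloc) 0

lemma Q_sub (hqloc : LocallyIntegrable q volume) (u v : ℝ) :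
    Q q v - Q q u = ∫ t in u..v, q t := by
  rw [Q, Q, ← intervalIntegral.integral_add_adjacent_intervals (q_ii hqloc 0 u) (q_ii hqloc u v)]
  ring

lemma Q_mono (hq : ∀ x, 0 ≤ q x) (hqloc : LocallyIntegrable q volume) :
    Monotone (Q q) := by
  intro u v huv
  have h : (0:ℝ) ≤ ∫ t in u..v, q t :=
    intervalIntegral.integral_nonneg huv (fun x _ => hq x)
  have := Q_sub hqloc u v
  linarith

/-- Master approximation lemma: if `P` is an `ε(W t - W s)`-approximate primitive of `I`
on small intervals, then `P` is a primitive of `I`. -/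
lemma master {I P W : ℝ → ℝ} {u v : ℝ} (huv : u ≤ v) (hWuv : W u ≤ W v)
    (hI : ∀ s t : ℝ, IntervalIntegrable I volume s t)
    (key : ∀ ε > (0:ℝ), ∃ δ > (0:ℝ), ∀ s t : ℝ, u ≤ s → s ≤ t → t ≤ v → t - s ≤ δ →
      |P t - P s - ∫ x in s..t, I x| ≤ ε * (W t - W s)) :
    P v - P u = ∫ x in u..v, I x := by
  have main : ∀ ε > (0:ℝ), |P v - P u - ∫ x in u..v, I x| ≤ ε * (W v - W u) := by
    intro ε hε
    obtain ⟨δ, hδ, hkey⟩ := key ε hε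
    obtain ⟨m, hm⟩ := exists_nat_ge ((v - u) / δ)
    set n := m + 1 with hn_def
    have hn : 0 < (n:ℝ) := by positivity
    set c := (v - u) / n with hc
    have hc0 : 0 ≤ c := div_nonneg (by linarith) hn.le
    have hcδ : c ≤ δ := by
      rw [hc, div_le_iff₀ hn]
      have h1 : (v - u) / δ ≤ (n:ℝ) := le_trans hm (by exact_mod_cast Nat.le_succ m)
      rw [div_le_iff₀ hδ] at h1
      linarith
    set s : ℕ → ℝ := fun i => u + i * c with hs
    have hs0 : s 0 = u := by simp [hs]
    have hsn : s n = v := by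
      simp only [hs, hc]
      field_simp
      ring
    have hstep : ∀ i : ℕ, s (i + 1) = s i + c := by
      intro i; simp only [hs]; push_cast; ring
    have hsmono : ∀ i j : ℕ, i ≤ j → s i ≤ s j := by
      intro i j hij
      simp only [hs]
      have : (i : ℝ) ≤ (j : ℝ) := by exact_mod_cast hij
      nlinarith
    have hub : ∀ i : ℕ, i ≤ n → s i ≤ v := by
      intro i hi; rw [← hsn]; exact hsmono i n hi
    have hlb : ∀ i : ℕ, u ≤ s i := by
      intro i; rw [← hs0]; exact hsmono 0 i (Nat.zero_le i)
    have hPsum : P v - P u = ∑ i ∈ Finset.range n, (P (s (i + 1)) - P (s i)) := by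
      rw [Finset.sum_range_sub (fun i => P (s i)), hs0, hsn]
    have hIsum : ∫ x in u..v, I x = ∑ i ∈ Finset.range n, ∫ x in s i..s (i + 1), I x := by
      rw [intervalIntegral.sum_integral_adjacent_intervals (fun k _ => hI _ _), hs0, hsn]
    rw [hPsum, hIsum]
    calc |∑ i ∈ Finset.range n, (P (s (i + 1)) - P (s i)) -
            ∑ i ∈ Finset.range n, ∫ x in s i..s (i + 1), I x|
        = |∑ i ∈ Finset.range n, (P (s (i + 1)) - P (s i) - ∫ x in s i..s (i + 1), I x)| := by
          congr 1; simp [Finset.sum_sub_distrib]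
      _ ≤ ∑ i ∈ Finset.range n, |P (s (i + 1)) - P (s i) - ∫ x in s i..s (i + 1), I x| :=
          Finset.abs_sum_le_sum_abs _ _
      _ ≤ ∑ i ∈ Finset.range n, ε * (W (s (i + 1)) - W (s i)) := by
          refine Finset.sum_le_sum fun i hi => ?_
          have hi' : i + 1 ≤ n := Finset.mem_range.mp hi
          refine hkey _ _ (hlb i) (by rw [hstep]; linarith) (hub _ hi') (by rw [hstep]; linarith)
      _ = ε * (W v - W u) := by
          rw [← Finset.mul_sum, Finset.sum_range_sub (fun i => W (s i)), hs0, hsn]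
  have habs : |P v - P u - ∫ x in u..v, I x| ≤ 0 := by
    refine le_of_forall_pos_le_add fun ε hε => ?_
    have h2 := main (ε / (W v - W u + 1)) (div_pos hε (by linarith))
    have h3 : ε / (W v - W u + 1) * (W v - W u) ≤ ε := by
      rw [div_mul_eq_mul_div, div_le_iff₀ (by linarith)]
      nlinarith
    linarith
  have := abs_nonneg (P v - P u - ∫ x in u..v, I x)
  have : |P v - P u - ∫ x in u..v, I x| = 0 := le_antisymm habs this
  have := abs_eq_zero.mp this
  linarith


lemma ftc_comp_le (hq : ∀ x, 0 ≤ q x) (hqloc : LocallyIntegrable q volume)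
    {φ φ' : ℝ → ℝ} (hd : ∀ x, HasDerivAt φ (φ' x) x)
    (hm : Monotone φ') (hc : Continuous φ') {u v : ℝ} (huv : u ≤ v) :
    ∫ s in u..v, q s * φ' (Q q s) = φ (Q q v) - φ (Q q u) := by
  have hQc := Q_cont hqloc
  have hQm := Q_mono hq hqloc
  have hI : ∀ s t : ℝ, IntervalIntegrable (fun x => q x * φ' (Q q x)) volume s t :=
    fun s t => (q_ii hqloc s t).mul_continuousOn ((hc.comp hQc).continuousOn)
  refine (master (I := fun x => q x * φ' (Q q x)) (P := fun x => φ (Q q x))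
    (W := fun x => φ' (Q q x)) huv (hm (hQm huv)) hI ?_).symm
  intro ε hε
  have hucont := (isCompact_Icc (a := u) (b := v)).uniformContinuousOn_of_continuous
    (hQc.continuousOn)
  rw [Metric.uniformContinuousOn_iff] at hucont
  obtain ⟨δ, hδ, hδ'⟩ := hucont ε hε
  refine ⟨δ / 2, by linarith, fun s t hus hst htv hts => ?_⟩
  have h1 : Q q s ≤ Q q t := hQm hst
  have h2 : Q q t - Q q s ≤ ε := by
    have := hδ' t ⟨le_trans hus hst, htv⟩ s ⟨hus, le_trans hst htv⟩
      (by rw [Real.dist_eq, abs_of_nonneg (by linarith)]; linarith)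
    rw [Real.dist_eq, abs_of_nonneg (by linarith)] at this
    linarith
  have hd' : (0:ℝ) ≤ φ' (Q q t) - φ' (Q q s) := by linarith [hm h1]
  have hconst : ∀ C : ℝ, ∫ x in s..t, q x * C = (Q q t - Q q s) * C := by
    intro C
    rw [intervalIntegral.integral_mul_const, ← Q_sub hqloc]
  have hIlo : (Q q t - Q q s) * φ' (Q q s) ≤ ∫ x in s..t, q x * φ' (Q q x) := by
    rw [← hconst]
    exact intervalIntegral.integral_mono_on hst ((q_ii hqloc s t).mul_const _) (hI s t)
      (fun x hx => mul_le_mul_of_nonneg_left (hm (hQm hx.1)) (hq x))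
  have hIhi : (∫ x in s..t, q x * φ' (Q q x)) ≤ (Q q t - Q q s) * φ' (Q q t) := by
    rw [← hconst]
    exact intervalIntegral.integral_mono_on hst (hI s t) ((q_ii hqloc s t).mul_const _)
      (fun x hx => mul_le_mul_of_nonneg_left (hm (hQm hx.2)) (hq x))
  have hφ : (Q q t - Q q s) * φ' (Q q s) ≤ φ (Q q t) - φ (Q q s) ∧
      φ (Q q t) - φ (Q q s) ≤ (Q q t - Q q s) * φ' (Q q t) := by
    rcases eq_or_lt_of_le h1 with heq | hlt
    · rw [← heq]; constructor <;> nlinarith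
    · obtain ⟨ξ, hξ, hslope⟩ := exists_hasDerivAt_eq_slope φ φ' hlt
        (fun x _ => (hd x).continuousAt.continuousWithinAt) (fun x _ => hd x)
      have hval : φ (Q q t) - φ (Q q s) = φ' ξ * (Q q t - Q q s) := by
        rw [eq_div_iff (sub_ne_zero.mpr (ne_of_gt hlt))] at hslope
        linarith
      have ha := hm hξ.1.le
      have hb := hm hξ.2.le
      constructor <;> nlinarith
  rw [abs_le]
  constructor <;> nlinarith

lemma ftc_comp (hq : ∀ x, 0 ≤ q x) (hqloc : LocallyIntegrable q volume)
    {φ φ' : ℝ → ℝ} (hd : ∀ x, HasDerivAt φ (φ' x) x)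
    (hm : Monotone φ') (hc : Continuous φ') (u v : ℝ) :
    ∫ s in u..v, q s * φ' (Q q s) = φ (Q q v) - φ (Q q u) := by
  rcases le_total u v with h | h
  · exact ftc_comp_le hq hqloc hd hm hc h
  · rw [intervalIntegral.integral_symm, ftc_comp_le hq hqloc hd hm hc h]; ring

lemma ftc_exp (hq : ∀ x, 0 ≤ q x) (hqloc : LocallyIntegrable q volume) (u v : ℝ) :
    ∫ s in u..v, q s * Real.exp (Q q s) = Real.exp (Q q v) - Real.exp (Q q u) :=
  ftc_comp hq hqloc (fun x => Real.hasDerivAt_exp x) Real.exp_monotone Real.continuous_exp u v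

lemma ftc_exp_neg (hq : ∀ x, 0 ≤ q x) (hqloc : LocallyIntegrable q volume) (u v : ℝ) :
    ∫ s in u..v, q s * (-Real.exp (-Q q s)) = Real.exp (-Q q v) - Real.exp (-Q q u) := by
  have hd : ∀ x : ℝ, HasDerivAt (fun x => Real.exp (-x)) (-Real.exp (-x)) x := by
    intro x
    have := (Real.hasDerivAt_exp (-x)).comp x (hasDerivAt_neg x)
    exact this.congr_deriv (by ring)
  have hm : Monotone fun x : ℝ => -Real.exp (-x) := fun x y hxy => by
    simp only [neg_le_neg_iff, Real.exp_le_exp]; linarith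
  exact ftc_comp hq hqloc hd hm ((Real.continuous_exp.comp continuous_neg).neg) u v

lemma prod_rule_le {A B A' B' : ℝ → ℝ} (hA : Continuous A) (hB : Continuous B)
    (hiA : ∀ u v : ℝ, IntervalIntegrable A' volume u v)
    (hiB : ∀ u v : ℝ, IntervalIntegrable B' volume u v)
    (hA' : ∀ u v : ℝ, A v - A u = ∫ s in u..v, A' s)
    (hB' : ∀ u v : ℝ, B v - B u = ∫ s in u..v, B' s) {u v : ℝ} (huv : u ≤ v) :
    A v * B v - A u * B u = ∫ s in u..v, (A' s * B s + A s * B' s) := by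
  set W : ℝ → ℝ := fun x => ∫ s in u..x, (|A' s| + |B' s|) with hW
  have hiW : ∀ s t : ℝ, IntervalIntegrable (fun x => |A' x| + |B' x|) volume s t :=
    fun s t => ((hiA s t).abs).add ((hiB s t).abs)
  have hWd : ∀ s t : ℝ, W t - W s = ∫ x in s..t, (|A' x| + |B' x|) := by
    intro s t
    rw [hW]
    simp only []
    rw [← intervalIntegral.integral_add_adjacent_intervals (hiW u s) (hiW s t)]
    ring
  have hWmono : ∀ {s t : ℝ}, s ≤ t → W s ≤ W t := by
    intro s t hst
    have h0 : (0:ℝ) ≤ ∫ x in s..t, (|A' x| + |B' x|) :=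
      intervalIntegral.integral_nonneg hst (fun x _ => by positivity)
    have := hWd s t; linarith
  have hI : ∀ s t : ℝ, IntervalIntegrable (fun x => A' x * B x + A x * B' x) volume s t :=
    fun s t => ((hiA s t).mul_continuousOn hB.continuousOn).add
      ((hiB s t).continuousOn_mul hA.continuousOn)
  refine (master (I := fun x => A' x * B x + A x * B' x) (P := fun x => A x * B x) (W := W) huv (hWmono huv) hI ?_)
  intro ε hε
  obtain ⟨δA, hδA, hA2⟩ := Metric.uniformContinuousOn_iff.mp
    ((isCompact_Icc (a := u) (b := v)).uniformContinuousOn_of_continuous hA.continuousOn)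
    (ε / 2) (by linarith)
  obtain ⟨δB, hδB, hB2⟩ := Metric.uniformContinuousOn_iff.mp
    ((isCompact_Icc (a := u) (b := v)).uniformContinuousOn_of_continuous hB.continuousOn)
    (ε / 2) (by linarith)
  refine ⟨min δA δB / 2, by positivity, fun s t hus hst htv hts => ?_⟩
  have hsI : s ∈ Icc u v := ⟨hus, le_trans hst htv⟩
  have htI : t ∈ Icc u v := ⟨le_trans hus hst, htv⟩
  have hPt : A t * B t - A s * B s = A t * (∫ x in s..t, B' x) + B s * (∫ x in s..t, A' x) := by
    rw [← hA' s t, ← hB' s t]; ring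
  have hsplit : ∫ x in s..t, (A' x * B x + A x * B' x) =
      (∫ x in s..t, ((B x - B s) * A' x + (A x - A t) * B' x)) +
      (A t * (∫ x in s..t, B' x) + B s * (∫ x in s..t, A' x)) := by
    have i1 : IntervalIntegrable (fun x => (B x - B s) * A' x) volume s t :=
      (hiA s t).continuousOn_mul ((hB.sub continuous_const).continuousOn)
    have i2 : IntervalIntegrable (fun x => (A x - A t) * B' x) volume s t :=
      (hiB s t).continuousOn_mul ((hA.sub continuous_const).continuousOn)
    rw [← intervalIntegral.integral_const_mul, ← intervalIntegral.integral_const_mul,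
      ← intervalIntegral.integral_add ((hiB s t).const_mul _) ((hiA s t).const_mul _),
      ← intervalIntegral.integral_add (i1.add i2)
        (((hiB s t).const_mul _).add ((hiA s t).const_mul _))]
    apply intervalIntegral.integral_congr
    intro x _
    ring
  rw [hPt, hsplit]
  have habs : |A t * (∫ x in s..t, B' x) + B s * (∫ x in s..t, A' x) -
      ((∫ x in s..t, ((B x - B s) * A' x + (A x - A t) * B' x)) +
        (A t * (∫ x in s..t, B' x) + B s * (∫ x in s..t, A' x)))| =
      |∫ x in s..t, ((B x - B s) * A' x + (A x - A t) * B' x)| := by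
    rw [show A t * (∫ x in s..t, B' x) + B s * (∫ x in s..t, A' x) -
      ((∫ x in s..t, ((B x - B s) * A' x + (A x - A t) * B' x)) +
        (A t * (∫ x in s..t, B' x) + B s * (∫ x in s..t, A' x))) =
      -(∫ x in s..t, ((B x - B s) * A' x + (A x - A t) * B' x)) by ring, abs_neg]
  rw [habs]
  have hbnd : ‖∫ x in s..t, ((B x - B s) * A' x + (A x - A t) * B' x)‖ ≤
      |∫ x in s..t, (ε / 2) * (|A' x| + |B' x|)| := by
    apply intervalIntegral.norm_integral_le_abs_of_norm_le _ ((hiW s t).const_mul _)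
    rw [ae_restrict_iff' measurableSet_uIoc]
    apply ae_of_all
    intro x hx
    rw [uIoc_of_le hst] at hx
    have hxI : x ∈ Icc u v := ⟨le_trans hus hx.1.le, le_trans hx.2 htv⟩
    have hd1 : dist (B x) (B s) < ε / 2 := by
      apply hB2 x hxI s hsI
      rw [Real.dist_eq, abs_of_nonneg (by linarith [hx.1.le])]
      have : t - s ≤ δB / 2 := le_trans hts (by
        have := min_le_right δA δB; linarith)
      linarith [hx.2]
    have hd2 : dist (A x) (A t) < ε / 2 := by
      apply hA2 x hxI t htI
      rw [Real.dist_eq, abs_of_nonpos (by linarith [hx.2])]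
      have : t - s ≤ δA / 2 := le_trans hts (by
        have := min_le_left δA δB; linarith)
      linarith [hx.1.le]
    rw [Real.dist_eq] at hd1 hd2
    have h1 : |(B x - B s) * A' x + (A x - A t) * B' x| ≤
        |B x - B s| * |A' x| + |A x - A t| * |B' x| := by
      calc |(B x - B s) * A' x + (A x - A t) * B' x| ≤
          |(B x - B s) * A' x| + |(A x - A t) * B' x| := abs_add_le _ _
        _ = |B x - B s| * |A' x| + |A x - A t| * |B' x| := by rw [abs_mul, abs_mul]
    have h2 : |B x - B s| * |A' x| ≤ (ε / 2) * |A' x| :=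
      mul_le_mul_of_nonneg_right hd1.le (abs_nonneg _)
    have h3 : |A x - A t| * |B' x| ≤ (ε / 2) * |B' x| :=
      mul_le_mul_of_nonneg_right hd2.le (abs_nonneg _)
    simp only [Real.norm_eq_abs]
    calc |(B x - B s) * A' x + (A x - A t) * B' x| ≤
        |B x - B s| * |A' x| + |A x - A t| * |B' x| := h1
      _ ≤ (ε / 2) * (|A' x| + |B' x|) := by linarith
  have hval : ∫ x in s..t, (ε / 2) * (|A' x| + |B' x|) = (ε / 2) * (W t - W s) := by
    rw [intervalIntegral.integral_const_mul, hWd]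
  rw [Real.norm_eq_abs] at hbnd
  have hWst : W s ≤ W t := hWmono hst
  calc |∫ x in s..t, ((B x - B s) * A' x + (A x - A t) * B' x)| ≤
      |∫ x in s..t, (ε / 2) * (|A' x| + |B' x|)| := hbnd
    _ = (ε / 2) * (W t - W s) := by rw [hval, abs_of_nonneg (by nlinarith)]
    _ ≤ ε * (W t - W s) := by nlinarith

lemma prod_rule {A B A' B' : ℝ → ℝ} (hA : Continuous A) (hB : Continuous B)
    (hiA : ∀ u v : ℝ, IntervalIntegrable A' volume u v)
    (hiB : ∀ u v : ℝ, IntervalIntegrable B' volume u v)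
    (hA' : ∀ u v : ℝ, A v - A u = ∫ s in u..v, A' s)
    (hB' : ∀ u v : ℝ, B v - B u = ∫ s in u..v, B' s) (u v : ℝ) :
    A v * B v - A u * B u = ∫ s in u..v, (A' s * B s + A s * B' s) := by
  rcases le_total u v with h | h
  · exact prod_rule_le hA hB hiA hiB hA' hB' h
  · rw [intervalIntegral.integral_symm, ← prod_rule_le hA hB hiA hiB hA' hB' h]; ring

lemma forward (hq : ∀ x, 0 ≤ q x) (hqloc : LocallyIntegrable q volume)
    (h : CorrectlySolvableC q) :
    ∃ a : ℝ, 0 < a ∧ 0 < ⨅ x : ℝ, ∫ t in x - a..x + a, q t := by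
  obtain ⟨c, hc, hmain⟩ := h
  refine ⟨c + 1, by linarith, ?_⟩
  have hlow : ∀ x₀ : ℝ, 2 / c ≤ ∫ t in x₀ - (c + 1)..x₀ + (c + 1), q t := by
    intro x₀
    by_contra hcon
    push_neg at hcon
    obtain ⟨hex, hbd⟩ := hmain (fun _ => 1) continuous_const ⟨1, fun t => by norm_num⟩
    obtain ⟨y, ⟨hsol, hycont, hybd⟩, -⟩ := hex
    have hyb : ∀ x, |y x| ≤ c := by
      intro x
      have := hbd y hsol hycont hybd x
      simpa using this
    have hid := hsol.2 (x₀ - (c + 1)) (x₀ + (c + 1))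
    have hii : IntervalIntegrable (fun t => q t * y t - 1) volume (x₀ - (c+1)) (x₀ + (c+1)) :=
      (hsol.1.integrableOn_isCompact isCompact_uIcc).intervalIntegrable
    have hqyi : IntervalIntegrable (fun t => q t * y t) volume (x₀ - (c+1)) (x₀ + (c+1)) := by
      have he : (fun t => q t * y t) = fun t => (q t * y t - 1) + 1 := by funext t; ring
      rw [he]
      exact hii.add intervalIntegrable_const
    have hqi := q_ii hqloc (x₀ - (c+1)) (x₀ + (c+1))
    have hsplit : ∫ t in x₀ - (c+1)..x₀ + (c+1), (q t * y t - 1) =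
        (∫ t in x₀ - (c+1)..x₀ + (c+1), q t * y t) - ∫ t in x₀ - (c+1)..x₀ + (c+1), (1:ℝ) :=
      intervalIntegral.integral_sub hqyi intervalIntegrable_const
    have hone : ∫ t in x₀ - (c+1)..x₀ + (c+1), (1:ℝ) = 2 * (c + 1) := by
      simp; ring
    have hup : (∫ t in x₀ - (c+1)..x₀ + (c+1), q t * y t) ≤
        (∫ t in x₀ - (c+1)..x₀ + (c+1), q t) * c := by
      rw [← intervalIntegral.integral_mul_const]
      exact intervalIntegral.integral_mono_on (by linarith) hqyi (hqi.mul_const _)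
        (fun t _ => mul_le_mul_of_nonneg_left (le_of_abs_le (hyb t)) (hq t))
    have hup2 : (∫ t in x₀ - (c+1)..x₀ + (c+1), q t) * c < 2 := by
      have := mul_lt_mul_of_pos_right hcon hc
      rw [div_mul_cancel₀] at this <;> [skip; positivity]
      linarith
    have h1 := abs_le.mp (hyb (x₀ + (c + 1)))
    have h2 := abs_le.mp (hyb (x₀ - (c + 1)))
    rw [hsplit, hone] at hid
    linarith [h1.1, h2.2]
  have h0 : (0:ℝ) < 2 / c := by positivity
  exact lt_of_lt_of_le h0 (le_ciInf hlow)

lemma inf_le_int {a : ℝ} (hq : ∀ x, 0 ≤ q x) (hqloc : LocallyIntegrable q volume) (ha : 0 < a)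
    (x : ℝ) : (⨅ x : ℝ, ∫ t in x - a..x + a, q t) ≤ ∫ t in x - a..x + a, q t := by
  apply ciInf_le
  refine ⟨0, ?_⟩
  rintro - ⟨z, rfl⟩
  exact intervalIntegral.integral_nonneg (by linarith) (fun t _ => hq t)

lemma step_Q {a : ℝ} (hq : ∀ x, 0 ≤ q x) (hqloc : LocallyIntegrable q volume) (ha : 0 < a)
    (x : ℝ) : (⨅ x : ℝ, ∫ t in x - a..x + a, q t) ≤ Q q (x + 2 * a) - Q q x := by
  have h := inf_le_int hq hqloc ha (x + a)
  rw [show x + a - a = x by ring, show x + a + a = x + 2 * a by ring] at h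
  rw [Q_sub hqloc x (x + 2 * a)]
  exact h

lemma growth_Q {a : ℝ} (hq : ∀ x, 0 ≤ q x) (hqloc : LocallyIntegrable q volume) (ha : 0 < a) :
    ∀ n : ℕ, ∀ x : ℝ, (n : ℝ) * (⨅ x : ℝ, ∫ t in x - a..x + a, q t) ≤ Q q (x + 2 * a * n) - Q q x := by
  intro n
  induction n with
  | zero => intro x; simp
  | succ n ih =>
    intro x
    have h1 := ih x
    have h2 := step_Q hq hqloc ha (x + 2 * a * n)
    rw [show x + 2 * a * n + 2 * a = x + 2 * a * (n + 1 : ℕ) by push_cast; ring] at h2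
    push_cast at h1 h2 ⊢
    linarith

lemma expbound_Q {a : ℝ} (hq : ∀ x, 0 ≤ q x) (hqloc : LocallyIntegrable q volume) (ha : 0 < a)
    (h0 : 0 < ⨅ x : ℝ, ∫ t in x - a..x + a, q t) {x t : ℝ} (hxt : x ≤ t) :
    Q q x - Q q t ≤ (⨅ x : ℝ, ∫ t in x - a..x + a, q t) -
      (⨅ x : ℝ, ∫ t in x - a..x + a, q t) / (2 * a) * (t - x) := by
  set q0 := ⨅ x : ℝ, ∫ t in x - a..x + a, q t with hq0
  set n := ⌊(t - x) / (2 * a)⌋₊ with hn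
  have h2a : 0 < 2 * a := by linarith
  have hnn : (0:ℝ) ≤ (t - x) / (2 * a) := div_nonneg (by linarith) h2a.le
  have hfl : (n : ℝ) ≤ (t - x) / (2 * a) := Nat.floor_le hnn
  have hfl2 : (t - x) / (2 * a) < n + 1 := Nat.lt_floor_add_one _
  have hle : x + 2 * a * n ≤ t := by
    rw [← sub_nonneg]
    have := mul_le_mul_of_nonneg_right hfl h2a.le
    rw [div_mul_cancel₀ _ (ne_of_gt h2a)] at this
    linarith
  have hmono := Q_mono hq hqloc hle
  have hgrow := growth_Q hq hqloc ha n x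
  have hmul := mul_lt_mul_of_pos_right hfl2 h0
  have : q0 / (2 * a) * (t - x) = (t - x) / (2 * a) * q0 := by ring
  rw [this]
  nlinarith

lemma exp_int_Ioi {k : ℝ} (hk : 0 < k) (x : ℝ) :
    ∫ t in Ioi x, Real.exp (-k * t) = Real.exp (-k * x) / k := by
  have hder : ∀ t ∈ Ioi x, HasDerivAt (fun t => -Real.exp (-k * t) / k) (Real.exp (-k * t)) t := by
    intro t _
    have h1 : HasDerivAt (fun t : ℝ => -k * t) (-k) t := by
      simpa using (hasDerivAt_id t).const_mul (-k)
    have h2 := (Real.hasDerivAt_exp (-k * t)).comp t h1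
    have h3 := (h2.const_mul (-1 / k))
    have e : (fun t => -Real.exp (-k * t) / k) = fun y => -1 / k * (Real.exp ∘ HMul.hMul (-k)) y := by
      funext s; simp [Function.comp]; ring
    rw [e]
    exact h3.congr_deriv (by field_simp)
  have hcont : ContinuousWithinAt (fun t => -Real.exp (-k * t) / k) (Ici x) x := by
    apply Continuous.continuousWithinAt
    continuity
  have hint : IntegrableOn (fun t => Real.exp (-k * t)) (Ioi x) volume := by
    have := exp_neg_integrableOn_Ioi x hk
    simpa [neg_mul, mul_comm] using this
  have htend : Filter.Tendsto (fun t => -Real.exp (-k * t) / k) Filter.atTop (nhds 0) := by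
    have h1 : Filter.Tendsto (fun t : ℝ => -k * t) Filter.atTop Filter.atBot :=
      Filter.tendsto_id.const_mul_atTop_of_neg (by linarith)
    have h2 : Filter.Tendsto (fun t : ℝ => Real.exp (-k * t)) Filter.atTop (nhds 0) :=
      Real.tendsto_exp_atBot.comp h1
    have h3 := h2.neg.div_const k
    simpa using h3
  have := MeasureTheory.integral_Ioi_of_hasDerivAt_of_tendsto hcont hder hint htend
  rw [this]
  field_simp
  ring

lemma integrableOn_expQf (hqloc : LocallyIntegrable q volume) {c₁ k : ℝ} (hk : 0 < k)
    (hD : ∀ x t : ℝ, x ≤ t → Q q x - Q q t ≤ c₁ - k * (t - x))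
    {f : ℝ → ℝ} (hfc : Continuous f) {M : ℝ} (hfM : ∀ t, |f t| ≤ M) (x : ℝ) :
    IntegrableOn (fun t => Real.exp (-Q q t) * f t) (Ioi x) volume := by
  have hM0 : 0 ≤ M := le_trans (abs_nonneg _) (hfM 0)
  set C := M * Real.exp (c₁ - Q q x + k * x) with hC
  have hgi : IntegrableOn (fun t => C * Real.exp (-k * t)) (Ioi x) volume :=
    (exp_neg_integrableOn_Ioi x hk).const_mul C
  refine Integrable.mono hgi ?_ ?_
  · exact ((Real.continuous_exp.comp (Q_cont hqloc).neg).mul hfc).aestronglyMeasurable.restrict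
  · rw [ae_restrict_iff' measurableSet_Ioi]
    apply ae_of_all
    intro t ht
    have h1 : Q q x - Q q t ≤ c₁ - k * (t - x) := hD x t (le_of_lt ht)
    have h2 : Real.exp (-Q q t) ≤ Real.exp (c₁ - Q q x + k * x) * Real.exp (-k * t) := by
      rw [← Real.exp_add]
      apply Real.exp_le_exp.mpr
      linarith
    have s1 : Real.exp (-Q q t) * |f t| ≤ Real.exp (-Q q t) * M :=
      mul_le_mul_of_nonneg_left (hfM t) (Real.exp_pos _).le
    have s2 : Real.exp (-Q q t) * M ≤ Real.exp (c₁ - Q q x + k * x) * Real.exp (-k * t) * M :=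
      mul_le_mul_of_nonneg_right h2 hM0
    calc ‖Real.exp (-Q q t) * f t‖ = Real.exp (-Q q t) * |f t| := by
          rw [Real.norm_eq_abs, abs_mul, abs_of_nonneg (Real.exp_pos (-Q q t)).le]
      _ ≤ Real.exp (c₁ - Q q x + k * x) * Real.exp (-k * t) * M := le_trans s1 s2
      _ = ‖C * Real.exp (-k * t)‖ := by
          rw [Real.norm_eq_abs, hC, abs_of_nonneg (mul_nonneg
            (mul_nonneg hM0 (Real.exp_pos _).le) (Real.exp_pos _).le)]
          ring

lemma G_bound (hqloc : LocallyIntegrable q volume) {c₁ k : ℝ} (hk : 0 < k)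
    (hD : ∀ x t : ℝ, x ≤ t → Q q x - Q q t ≤ c₁ - k * (t - x))
    {f : ℝ → ℝ} (hfc : Continuous f) {M : ℝ} (hfM : ∀ t, |f t| ≤ M) (x : ℝ) :
    |∫ t in Ioi x, Real.exp (-Q q t) * f t| ≤ M * Real.exp (c₁ - Q q x) / k := by
  have hM0 : 0 ≤ M := le_trans (abs_nonneg _) (hfM 0)
  set C := M * Real.exp (c₁ - Q q x + k * x) with hC
  have hgi : IntegrableOn (fun t => C * Real.exp (-k * t)) (Ioi x) volume :=
    (exp_neg_integrableOn_Ioi x hk).const_mul C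
  have hfi := integrableOn_expQf hqloc hk hD hfc hfM x
  have h1 : |∫ t in Ioi x, Real.exp (-Q q t) * f t| ≤
      ∫ t in Ioi x, |Real.exp (-Q q t) * f t| := by
    have := MeasureTheory.norm_integral_le_integral_norm (μ := volume.restrict (Ioi x))
        (fun t => Real.exp (-Q q t) * f t)
    simp only [Real.norm_eq_abs] at this
    exact this
  have h2 : ∫ t in Ioi x, |Real.exp (-Q q t) * f t| ≤
      ∫ t in Ioi x, C * Real.exp (-k * t) := by
    apply setIntegral_mono_on hfi.abs hgi measurableSet_Ioi
    intro t ht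
    have hd : Q q x - Q q t ≤ c₁ - k * (t - x) := hD x t (le_of_lt ht)
    have h2' : Real.exp (-Q q t) ≤ Real.exp (c₁ - Q q x + k * x) * Real.exp (-k * t) := by
      rw [← Real.exp_add]; apply Real.exp_le_exp.mpr; linarith
    rw [abs_mul, abs_of_nonneg (Real.exp_pos (-Q q t)).le]
    have s1 : Real.exp (-Q q t) * |f t| ≤ Real.exp (-Q q t) * M :=
      mul_le_mul_of_nonneg_left (hfM t) (Real.exp_pos _).le
    have s2 : Real.exp (-Q q t) * M ≤ Real.exp (c₁ - Q q x + k * x) * Real.exp (-k * t) * M :=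
      mul_le_mul_of_nonneg_right h2' hM0
    have h3 : C * Real.exp (-k * t) = Real.exp (c₁ - Q q x + k * x) * Real.exp (-k * t) * M := by
      rw [hC]; ring
    rw [h3]; linarith
  have h4 : ∫ t in Ioi x, C * Real.exp (-k * t) = C * (Real.exp (-k * x) / k) := by
    rw [MeasureTheory.integral_const_mul, exp_int_Ioi hk]
  have h5 : C * (Real.exp (-k * x) / k) = M * Real.exp (c₁ - Q q x) / k := by
    have he : Real.exp (c₁ - Q q x + k * x) * Real.exp (-k * x) = Real.exp (c₁ - Q q x) := by
      rw [← Real.exp_add]; congr 1; ring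
    rw [hC, ← he]; ring
  calc |∫ t in Ioi x, Real.exp (-Q q t) * f t| ≤ ∫ t in Ioi x, |Real.exp (-Q q t) * f t| := h1
    _ ≤ ∫ t in Ioi x, C * Real.exp (-k * t) := h2
    _ = C * (Real.exp (-k * x) / k) := h4
    _ = M * Real.exp (c₁ - Q q x) / k := h5

lemma G_split (hqloc : LocallyIntegrable q volume) {c₁ k : ℝ} (hk : 0 < k)
    (hD : ∀ x t : ℝ, x ≤ t → Q q x - Q q t ≤ c₁ - k * (t - x))
    {f : ℝ → ℝ} (hfc : Continuous f) {M : ℝ} (hfM : ∀ t, |f t| ≤ M) {u v : ℝ} (huv : u ≤ v) :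
    (∫ t in Ioi u, Real.exp (-Q q t) * f t) =
      (∫ t in u..v, Real.exp (-Q q t) * f t) + ∫ t in Ioi v, Real.exp (-Q q t) * f t := by
  have hui := integrableOn_expQf hqloc hk hD hfc hfM u
  have h1 : Ioc u v ∪ Ioi v = Ioi u := Ioc_union_Ioi_eq_Ioi huv
  have hdisj : Disjoint (Ioc u v) (Ioi v) := by
    apply Set.disjoint_left.mpr
    intro t ht1 ht2
    exact absurd ht1.2 (not_le.mpr ht2)
  rw [intervalIntegral.integral_of_le huv, ← h1,
    MeasureTheory.setIntegral_union hdisj measurableSet_Ioi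
      (hui.mono_set (by rw [← h1]; exact subset_union_left))
      (hui.mono_set (by rw [← h1]; exact subset_union_right))]

lemma solution_exists (hq : ∀ x, 0 ≤ q x) (hqloc : LocallyIntegrable q volume)
    {c₁ k : ℝ} (hk : 0 < k)
    (hD : ∀ x t : ℝ, x ≤ t → Q q x - Q q t ≤ c₁ - k * (t - x))
    {f : ℝ → ℝ} (hfc : Continuous f) {M : ℝ} (hfM : ∀ t, |f t| ≤ M) :
    ∃ y : ℝ → ℝ, IsSolution q f y ∧ Continuous y ∧ ∀ x, |y x| ≤ M * Real.exp c₁ / k := by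
  set G : ℝ → ℝ := fun x => ∫ t in Ioi x, Real.exp (-Q q t) * f t with hG
  set y : ℝ → ℝ := fun x => Real.exp (Q q x) * G x with hy
  have hh : Continuous (fun s => -(Real.exp (-Q q s) * f s)) :=
    ((Real.continuous_exp.comp (Q_cont hqloc).neg).mul hfc).neg
  have hGd : ∀ u v : ℝ, G v - G u = ∫ s in u..v, -(Real.exp (-Q q s) * f s) := by
    intro u v
    rcases le_total u v with h | h
    · have h2 := G_split hqloc hk hD hfc hfM h
      rw [intervalIntegral.integral_neg]
      rw [hG]
      simp only []
      linarith
    · have h2 := G_split hqloc hk hD hfc hfM h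
      rw [intervalIntegral.integral_neg, intervalIntegral.integral_symm, neg_neg]
      rw [hG]
      simp only []
      linarith
  have hGc : Continuous G := by
    have he : G = fun x => G 0 + ∫ s in (0:ℝ)..x, -(Real.exp (-Q q s) * f s) := by
      funext x
      have := hGd 0 x
      linarith
    rw [he]
    exact continuous_const.add
      (intervalIntegral.continuous_primitive (fun a b => hh.intervalIntegrable a b) 0)
  have hyc : Continuous y := (Real.continuous_exp.comp (Q_cont hqloc)).mul hGc
  have hA' : ∀ u v : ℝ, Real.exp (Q q v) - Real.exp (Q q u) =
      ∫ s in u..v, q s * Real.exp (Q q s) := fun u v => (ftc_exp hq hqloc u v).symm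
  have hiA : ∀ u v : ℝ, IntervalIntegrable (fun s => q s * Real.exp (Q q s)) volume u v :=
    fun u v => (q_ii hqloc u v).mul_continuousOn
      (Real.continuous_exp.comp (Q_cont hqloc)).continuousOn
  have hiB : ∀ u v : ℝ, IntervalIntegrable (fun s => -(Real.exp (-Q q s) * f s)) volume u v :=
    fun u v => hh.intervalIntegrable u v
  have hpr := prod_rule (Real.continuous_exp.comp (Q_cont hqloc)) hGc hiA hiB hA' hGd
  have hsol2 : ∀ u v : ℝ, y v - y u = ∫ t in u..v, (q t * y t - f t) := by
    intro u v
    have h3 := hpr u v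
    simp only [Function.comp] at h3
    rw [hy]
    simp only []
    rw [h3]
    apply intervalIntegral.integral_congr
    intro s _
    have he1 : Real.exp (Q q s) * Real.exp (-Q q s) = 1 := by
      rw [← Real.exp_add]; simp
    show q s * Real.exp (Q q s) * G s + Real.exp (Q q s) * -(Real.exp (-Q q s) * f s)
      = q s * (Real.exp (Q q s) * G s) - f s
    rw [show Real.exp (Q q s) * -(Real.exp (-Q q s) * f s) =
      -(Real.exp (Q q s) * Real.exp (-Q q s)) * f s by ring, he1]
    ring
  have hyb : ∀ x, |y x| ≤ M * Real.exp c₁ / k := by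
    intro x
    have hGb := G_bound hqloc hk hD hfc hfM x
    rw [hy]
    simp only []
    rw [abs_mul, abs_of_nonneg (Real.exp_pos _).le]
    have h4 : Real.exp (Q q x) * |G x| ≤ Real.exp (Q q x) * (M * Real.exp (c₁ - Q q x) / k) :=
      mul_le_mul_of_nonneg_left hGb (Real.exp_pos _).le
    have he : Real.exp (Q q x) * (M * Real.exp (c₁ - Q q x) / k) = M * Real.exp c₁ / k := by
      have : Real.exp (Q q x) * Real.exp (c₁ - Q q x) = Real.exp c₁ := by
        rw [← Real.exp_add]; congr 1; ring
      rw [← this]; ring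
    linarith
  have hMk : (0:ℝ) ≤ M * Real.exp c₁ / k := le_trans (abs_nonneg _) (hyb 0)
  have hli : LocallyIntegrable (fun t => q t * y t - f t) volume := by
    rw [MeasureTheory.locallyIntegrable_iff]
    intro K hK
    have h1 : IntegrableOn (fun t => y t * q t) K volume :=
      (hqloc.integrableOn_isCompact hK).bdd_mul (c := M * Real.exp c₁ / k) hyc.aestronglyMeasurable.restrict
        (ae_of_all _ fun x => by rw [Real.norm_eq_abs]; exact hyb x)
    have h2 : IntegrableOn (fun t => q t * y t) K volume := by
      have : (fun t => q t * y t) = fun t => y t * q t := by funext t; ring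
      rw [this]; exact h1
    exact h2.sub (hfc.continuousOn.integrableOn_compact hK)
  exact ⟨y, ⟨hli, hsol2⟩, hyc, hyb⟩

lemma unique_sol (hq : ∀ x, 0 ≤ q x) (hqloc : LocallyIntegrable q volume)
    (hub : ∀ C : ℝ, ∃ x : ℝ, C ≤ Q q x)
    {f y₁ y₂ : ℝ → ℝ} (h₁ : IsSolution q f y₁) (hc₁ : Continuous y₁)
    (hb₁ : ∃ M : ℝ, ∀ t, |y₁ t| ≤ M)
    (h₂ : IsSolution q f y₂) (hc₂ : Continuous y₂) (hb₂ : ∃ M : ℝ, ∀ t, |y₂ t| ≤ M) :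
    y₁ = y₂ := by
  obtain ⟨M₁, hM₁⟩ := hb₁
  obtain ⟨M₂, hM₂⟩ := hb₂
  set z : ℝ → ℝ := fun x => y₁ x - y₂ x with hz
  have hzc : Continuous z := hc₁.sub hc₂
  have hzd : ∀ u v : ℝ, z v - z u = ∫ s in u..v, q s * z s := by
    intro u v
    have e1 := h₁.2 u v
    have e2 := h₂.2 u v
    have i1 : IntervalIntegrable (fun t => q t * y₁ t - f t) volume u v :=
      (h₁.1.integrableOn_isCompact isCompact_uIcc).intervalIntegrable
    have i2 : IntervalIntegrable (fun t => q t * y₂ t - f t) volume u v :=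
      (h₂.1.integrableOn_isCompact isCompact_uIcc).intervalIntegrable
    have e3 := intervalIntegral.integral_sub i1 i2
    have e4 : ∫ s in u..v, q s * z s =
        ∫ s in u..v, ((q s * y₁ s - f s) - (q s * y₂ s - f s)) := by
      apply intervalIntegral.integral_congr
      intro s _
      show q s * z s = (q s * y₁ s - f s) - (q s * y₂ s - f s)
      rw [hz]; ring
    rw [hz]
    simp only []
    rw [e4, e3]
    linarith
  have hA' : ∀ u v : ℝ, Real.exp (-Q q v) - Real.exp (-Q q u) =
      ∫ s in u..v, q s * (-Real.exp (-Q q s)) := fun u v => (ftc_exp_neg hq hqloc u v).symm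
  have hiA : ∀ u v : ℝ, IntervalIntegrable (fun s => q s * (-Real.exp (-Q q s))) volume u v :=
    fun u v => (q_ii hqloc u v).mul_continuousOn
      ((Real.continuous_exp.comp (Q_cont hqloc).neg).neg).continuousOn
  have hiB : ∀ u v : ℝ, IntervalIntegrable (fun s => q s * z s) volume u v :=
    fun u v => (q_ii hqloc u v).mul_continuousOn hzc.continuousOn
  have hpr := prod_rule (Real.continuous_exp.comp (Q_cont hqloc).neg) hzc hiA hiB hA' hzd
  have hQ0 : Q q 0 = 0 := intervalIntegral.integral_same
  have hw : ∀ x : ℝ, Real.exp (-Q q x) * z x = z 0 := by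
    intro x
    have h3 := hpr 0 x
    simp only [Function.comp, Pi.neg_apply] at h3
    have h0 : (∫ s in (0:ℝ)..x,
        (q s * (-Real.exp (-Q q s)) * z s + Real.exp (-Q q s) * (q s * z s))) = 0 := by
      have hcg : ∀ s ∈ uIcc (0:ℝ) x,
          (q s * (-Real.exp (-Q q s)) * z s + Real.exp (-Q q s) * (q s * z s)) = 0 :=
        fun s _ => by ring
      rw [intervalIntegral.integral_congr (g := fun _ => (0:ℝ)) hcg,
        intervalIntegral.integral_zero]
    rw [h0] at h3
    rw [hQ0] at h3
    simp at h3
    linarith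
  have hzx : ∀ x, z x = z 0 * Real.exp (Q q x) := by
    intro x
    have he : Real.exp (-Q q x) * Real.exp (Q q x) = 1 := by
      rw [← Real.exp_add]; simp
    calc z x = (Real.exp (-Q q x) * Real.exp (Q q x)) * z x := by rw [he]; ring
      _ = (Real.exp (-Q q x) * z x) * Real.exp (Q q x) := by ring
      _ = z 0 * Real.exp (Q q x) := by rw [hw x]
  have hMz : ∀ x, |z x| ≤ M₁ + M₂ := by
    intro x
    rw [hz]
    simp only []
    calc |y₁ x - y₂ x| ≤ |y₁ x| + |y₂ x| := abs_sub _ _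
      _ ≤ M₁ + M₂ := add_le_add (hM₁ x) (hM₂ x)
  have hz0 : z 0 = 0 := by
    by_contra hne
    have hpos : 0 < |z 0| := abs_pos.mpr hne
    have hM0 : 0 ≤ M₁ + M₂ := le_trans (abs_nonneg _) (hMz 0)
    obtain ⟨x, hx⟩ := hub (Real.log ((M₁ + M₂ + 1) / |z 0|))
    have hdivpos : 0 < (M₁ + M₂ + 1) / |z 0| := div_pos (by linarith) hpos
    have hexp : (M₁ + M₂ + 1) / |z 0| ≤ Real.exp (Q q x) := by
      rw [← Real.exp_log hdivpos]
      exact Real.exp_le_exp.mpr hx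
    have habs : |z x| = |z 0| * Real.exp (Q q x) := by
      rw [hzx x, abs_mul, abs_of_nonneg (Real.exp_pos _).le]
    have h5 : M₁ + M₂ + 1 ≤ |z 0| * Real.exp (Q q x) := by
      rw [div_le_iff₀ hpos] at hexp
      linarith [hexp]
    have := hMz x
    rw [habs] at this
    linarith
  funext x
  have := hzx x
  rw [hz0] at this
  rw [hz] at this
  simp at this
  linarith

lemma backward (hq : ∀ x, 0 ≤ q x) (hqloc : LocallyIntegrable q volume) {a : ℝ} (ha : 0 < a)
    (h0 : 0 < ⨅ x : ℝ, ∫ t in x - a..x + a, q t) : CorrectlySolvableC q := by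
  set q0 := ⨅ x : ℝ, ∫ t in x - a..x + a, q t with hq0
  set k := q0 / (2 * a) with hk_def
  have hk : 0 < k := div_pos h0 (by linarith)
  have hD : ∀ x t : ℝ, x ≤ t → Q q x - Q q t ≤ q0 - k * (t - x) := by
    intro x t hxt
    have h5 := expbound_Q hq hqloc ha h0 hxt
    rw [← hq0, ← hk_def] at h5
    exact h5
  have hQ0 : Q q 0 = 0 := intervalIntegral.integral_same
  have hub : ∀ C : ℝ, ∃ x : ℝ, C ≤ Q q x := by
    intro C
    obtain ⟨n, hn⟩ := exists_nat_ge (C / q0)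
    refine ⟨0 + 2 * a * n, ?_⟩
    have h6 := growth_Q hq hqloc ha n 0
    rw [← hq0] at h6
    rw [hQ0, sub_zero] at h6
    rw [div_le_iff₀ h0] at hn
    linarith
  have hcpos : (0:ℝ) < Real.exp q0 / k + 1 :=
    add_pos (div_pos (Real.exp_pos _) hk) one_pos
  refine ⟨Real.exp q0 / k + 1, hcpos, ?_⟩
  intro f hfc hfb
  obtain ⟨M₀, hM₀⟩ := hfb
  set S := ⨆ t : ℝ, |f t| with hS
  have hSb : ∀ t, |f t| ≤ S := fun t =>
    le_ciSup ⟨M₀, by rintro - ⟨z, rfl⟩; exact hM₀ z⟩ t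
  have hS0 : 0 ≤ S := le_trans (abs_nonneg _) (hSb 0)
  obtain ⟨y, hysol, hyc, hyb⟩ := solution_exists hq hqloc hk hD hfc hSb
  constructor
  · refine ⟨y, ⟨hysol, hyc, ⟨S * Real.exp q0 / k, hyb⟩⟩, ?_⟩
    rintro y' ⟨hs', hc', hb'⟩
    exact unique_sol hq hqloc hub hs' hc' hb' hysol hyc ⟨_, hyb⟩
  · intro y' hs' hc' hb' x
    have hyy : y' = y := unique_sol hq hqloc hub hs' hc' hb' hysol hyc ⟨_, hyb⟩
    rw [hyy]
    calc |y x| ≤ S * Real.exp q0 / k := hyb x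
      _ = Real.exp q0 / k * S := by ring
      _ ≤ (Real.exp q0 / k + 1) * S := by nlinarith

end Stmt1Aux

theorem stmt1 (q : ℝ → ℝ) (hq : ∀ x, 0 ≤ q x)
    (hqloc : LocallyIntegrable q volume) :
    CorrectlySolvableC q ↔
      ∃ a : ℝ, 0 < a ∧ 0 < ⨅ x : ℝ, ∫ t in x - a..x + a, q t := by
  constructor
  · exact Stmt1Aux.forward hq hqloc
  · rintro ⟨a, ha, h0⟩
    exact Stmt1Aux.backward hq hqloc ha h0
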